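/- arXiv:2402.08711 — 3 statements merged into one kernel-verified Lean document; each statement's English description precedes it below -/
import Mathlib

section
/- For any 3-tensor A ∈ ℝ^{d×d×d}, ‖A‖_{{1,2}{3}} ≤ √d · ‖A‖_{{1}{2}{3}}. -/
open scoped BigOperators

/-- The `{1}{2}{3}` tensor norm of a 3-tensor. -/
noncomputable def norm123 {d : ℕ} (A : Fin d → Fin d → Fin d → ℝ) : ℝ :=
  sSup {s | ∃ x y z : Fin d → ℝ,
    (∑ i, x i ^ 2) ≤ 1 ∧ (∑ j, y j ^ 2) ≤ 1 ∧ (∑ k, z k ^ 2) ≤ 1 ∧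
    s = ∑ i, ∑ j, ∑ k, A i j k * x i * y j * z k}

/-- The `{1,2}{3}` tensor norm of a 3-tensor. -/
noncomputable def norm12_3 {d : ℕ} (A : Fin d → Fin d → Fin d → ℝ) : ℝ :=
  sSup {s | ∃ (x : Fin d → Fin d → ℝ) (y : Fin d → ℝ),
    (∑ i, ∑ j, x i j ^ 2) ≤ 1 ∧ (∑ k, y k ^ 2) ≤ 1 ∧
    s = ∑ i, ∑ j, ∑ k, A i j k * x i j * y k}

/-- The spectral (operator) norm of a matrix: sup of `‖M y‖` over `‖y‖ ≤ 1`. -/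
noncomputable def opNorm {d : ℕ} (M : Matrix (Fin d) (Fin d) ℝ) : ℝ :=
  sSup {s | ∃ y : Fin d → ℝ, (∑ k, y k ^ 2) ≤ 1 ∧
    s = Real.sqrt (∑ i, (∑ k, M i k * y k) ^ 2)}

/-- `‖A‖_{{1,2}{3}} ≤ √d · ‖A‖_{{1}{2}{3}}`. -/
theorem norm12_3_le_sqrt_dim_mul_norm123 {d : ℕ} (A : Fin d → Fin d → Fin d → ℝ) :
    norm12_3 A ≤ Real.sqrt d * norm123 A := by
  set S := {s | ∃ x y z : Fin d → ℝ,
    (∑ i, x i ^ 2) ≤ 1 ∧ (∑ j, y j ^ 2) ≤ 1 ∧ (∑ k, z k ^ 2) ≤ 1 ∧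
    s = ∑ i, ∑ j, ∑ k, A i j k * x i * y j * z k} with hS
  have hbdd : BddAbove S := by
    refine ⟨∑ i, ∑ j, ∑ k, |A i j k|, ?_⟩
    rintro s ⟨x, y, z, hx, hy, hz, rfl⟩
    have hb : ∀ (w : Fin d → ℝ), (∑ i, w i ^ 2) ≤ 1 → ∀ i, |w i| ≤ 1 := by
      intro w hw i
      have h1 : w i ^ 2 ≤ 1 :=
        le_trans (Finset.single_le_sum (f := fun i => w i ^ 2)
          (fun i _ => sq_nonneg _) (Finset.mem_univ i)) hw
      rw [abs_le]; constructor <;> nlinarith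
    refine Finset.sum_le_sum fun i _ => Finset.sum_le_sum fun j _ =>
      Finset.sum_le_sum fun k _ => ?_
    calc A i j k * x i * y j * z k ≤ |A i j k * x i * y j * z k| := le_abs_self _
      _ = |A i j k| * |x i| * |y j| * |z k| := by rw [abs_mul, abs_mul, abs_mul]
      _ ≤ |A i j k| * 1 * 1 * 1 := by
          gcongr <;> [exact hb x hx i; exact hb y hy j; exact hb z hz k]
      _ = |A i j k| := by ring
  have hN0 : 0 ≤ norm123 A := by
    refine le_csSup hbdd ⟨0, 0, 0, ?_, ?_, ?_, ?_⟩ <;> simp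
  set N := norm123 A
  have hkey : ∀ (j : Fin d) (y : Fin d → ℝ), (∑ k, y k ^ 2) ≤ 1 →
      (∑ i, (∑ k, A i j k * y k) ^ 2) ≤ N ^ 2 := by
    intro j y hy
    set M : Fin d → ℝ := fun i => ∑ k, A i j k * y k with hM
    set c : ℝ := ∑ i, M i ^ 2 with hc
    have hc0 : 0 ≤ c := Finset.sum_nonneg fun i _ => sq_nonneg _
    show c ≤ N ^ 2
    rcases eq_or_lt_of_le hc0 with h | h
    · rw [← h]; positivity
    · have hsc : (0:ℝ) < Real.sqrt c := Real.sqrt_pos.mpr h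
      set u : Fin d → ℝ := fun i => M i / Real.sqrt c with hu
      have hsq : Real.sqrt c ^ 2 = c := Real.sq_sqrt hc0
      have hu1 : (∑ i, u i ^ 2) ≤ 1 := by
        have : (∑ i, u i ^ 2) = c / c := by
          rw [hc, Finset.sum_div]
          refine Finset.sum_congr rfl fun i _ => ?_
          rw [hu]; field_simp
          rw [hsq, ← hc, mul_div_assoc, div_self h.ne', mul_one]
        rw [this, div_self h.ne']
      set v : Fin d → ℝ := fun j' => if j' = j then 1 else 0 with hv
      have hv1 : (∑ j', v j' ^ 2) ≤ 1 := by
        simp [hv, apply_ite (· ^ (2:ℕ))]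
      have hmem : Real.sqrt c ∈ S := by
        refine ⟨u, v, y, hu1, hv1, hy, ?_⟩
        have : ∀ i, (∑ j', ∑ k, A i j' k * u i * v j' * y k)
            = u i * M i := by
          intro i
          have : (∑ j', ∑ k, A i j' k * u i * v j' * y k)
              = ∑ j', v j' * (∑ k, A i j' k * u i * y k) := by
            refine Finset.sum_congr rfl fun j' _ => ?_
            rw [Finset.mul_sum]; exact Finset.sum_congr rfl fun k _ => by ring
          rw [this, hv]
          simp only [ite_mul, one_mul, zero_mul]
          rw [Finset.sum_ite_eq' Finset.univ j
            (fun j' => ∑ k, A i j' k * u i * y k)]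
          simp only [Finset.mem_univ, if_true]
          rw [hM, Finset.mul_sum]
          exact Finset.sum_congr rfl fun k _ => by ring
        rw [Finset.sum_congr rfl fun i _ => this i]
        have : (∑ i, u i * M i) = c / Real.sqrt c := by
          rw [hc, Finset.sum_div]
          refine Finset.sum_congr rfl fun i _ => ?_
          rw [hu]; field_simp; rw [← hc, mul_div_assoc, div_self hsc.ne', mul_one]
        rw [this, eq_div_iff hsc.ne']; exact Real.mul_self_sqrt hc0
      have hle : Real.sqrt c ≤ N := le_csSup hbdd hmem
      nlinarith [Real.sqrt_nonneg c]
  refine Real.sSup_le ?_ (mul_nonneg (Real.sqrt_nonneg _) hN0)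
  rintro s ⟨x, y, hx, hy, rfl⟩
  set M : Fin d → Fin d → ℝ := fun i j => ∑ k, A i j k * y k with hM
  have hs : (∑ i, ∑ j, ∑ k, A i j k * x i j * y k) = ∑ i, ∑ j, x i j * M i j := by
    refine Finset.sum_congr rfl fun i _ => Finset.sum_congr rfl fun j _ => ?_
    rw [hM, Finset.mul_sum]
    exact Finset.sum_congr rfl fun k _ => by ring
  have hcs := Finset.sum_mul_sq_le_sq_mul_sq Finset.univ
    (fun p : Fin d × Fin d => x p.1 p.2) (fun p : Fin d × Fin d => M p.1 p.2)
  simp only [Fintype.sum_prod_type] at hcs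
  have hMb : (∑ i, ∑ j, M i j ^ 2) ≤ (d : ℝ) * N ^ 2 := by
    rw [Finset.sum_comm]
    calc (∑ j, ∑ i, M i j ^ 2) ≤ ∑ _j : Fin d, N ^ 2 :=
          Finset.sum_le_sum fun j _ => hkey j y hy
      _ = (d : ℝ) * N ^ 2 := by simp [mul_comm]
  have hB : Real.sqrt d * N ≥ 0 := mul_nonneg (Real.sqrt_nonneg _) hN0
  have hBsq : (Real.sqrt d * N) ^ 2 = (d : ℝ) * N ^ 2 := by
    rw [mul_pow, Real.sq_sqrt (Nat.cast_nonneg d)]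
  have hs2 : (∑ i, ∑ j, ∑ k, A i j k * x i j * y k) ^ 2 ≤ (d : ℝ) * N ^ 2 := by
    rw [hs]
    calc (∑ i, ∑ j, x i j * M i j) ^ 2
        ≤ (∑ i, ∑ j, x i j ^ 2) * (∑ i, ∑ j, M i j ^ 2) := hcs
      _ ≤ 1 * ((d : ℝ) * N ^ 2) := by
          refine mul_le_mul hx hMb (Finset.sum_nonneg fun i _ =>
            Finset.sum_nonneg fun j _ => sq_nonneg _) zero_le_one
      _ = (d : ℝ) * N ^ 2 := one_mul _
  nlinarith [hs2, hBsq, hB]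
end

section
/- Let p ~ N(0, I_d) be a standard d-dimensional Gaussian and A ∈ ℝ^{d×d×d}. Then E[ Σ_k ( Σ_{i,j} A_{ijk} p_i p_j )² ] ≤ 3d · ‖A‖²_{{1,2}{3}}. -/
open scoped BigOperators

open MeasureTheory ProbabilityTheory Real
open scoped ENNReal NNReal



lemma gauss_int_eq (g : ℝ → ℝ) :
    ∫ x, g x ∂(gaussianReal 0 1)
      = ∫ x, gaussianPDFReal 0 1 x * g x := by
  rw [gaussianReal_of_var_ne_zero 0 one_ne_zero]
  have h : gaussianPDF 0 1 = fun x => ((gaussianPDFReal 0 1 x).toNNReal : ℝ≥0∞) := by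
    ext x; simp [gaussianPDF, ENNReal.ofReal]
  rw [h, integral_withDensity_eq_integral_smul ((measurable_gaussianPDFReal 0 1).real_toNNReal) g]
  congr 1; ext x
  simp [NNReal.smul_def, Real.coe_toNNReal _ (gaussianPDFReal_nonneg 0 1 x)]

lemma pdf_eq (x : ℝ) : gaussianPDFReal 0 1 x = (√(2 * π))⁻¹ * rexp (-(1/2) * x ^ 2) := by
  simp only [gaussianPDFReal]
  rw [NNReal.coe_one]
  norm_num
  refine Or.inl ?_
  ring_nf

lemma integrable_pow_mul_pdf (n : ℕ) :
    Integrable (fun x : ℝ => gaussianPDFReal 0 1 x * x ^ n) := by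
  have h := (integrable_rpow_mul_exp_neg_mul_sq (b := 1/2) (by norm_num) (s := (n:ℝ))
    (lt_of_lt_of_le neg_one_lt_zero (Nat.cast_nonneg n))).const_mul (√(2 * π))⁻¹
  refine h.congr ?_
  filter_upwards with x
  rw [pdf_eq, rpow_natCast]
  ring

lemma integrable_pow_gauss (n : ℕ) :
    Integrable (fun x : ℝ => x ^ n) (gaussianReal 0 1) := by
  rw [gaussianReal_of_var_ne_zero 0 one_ne_zero]
  have h : gaussianPDF 0 1 = fun x => ((gaussianPDFReal 0 1 x).toNNReal : ℝ≥0∞) := by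
    ext x; simp [gaussianPDF, ENNReal.ofReal]
  rw [h, integrable_withDensity_iff_integrable_smul
    ((measurable_gaussianPDFReal 0 1).real_toNNReal)]
  refine (integrable_pow_mul_pdf n).congr ?_
  filter_upwards with x
  simp [NNReal.smul_def, Real.coe_toNNReal _ (gaussianPDFReal_nonneg 0 1 x)]

noncomputable def M (n : ℕ) : ℝ := ∫ x, x ^ n ∂(gaussianReal 0 1)

lemma M_zero : M 0 = 1 := by simp [M]

lemma M_odd (n : ℕ) (hn : Odd n) : M n = 0 := by
  have hmap : (gaussianReal 0 1).map (fun x => (-1 : ℝ) * x) = gaussianReal 0 1 := by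
    have := gaussianReal_map_const_mul (μ := 0) (v := 1) (-1 : ℝ)
    simpa using this
  have : M n = ∫ x, ((-1 : ℝ) * x) ^ n ∂(gaussianReal 0 1) := by
    rw [M]
    conv_lhs => rw [← hmap]
    rw [integral_map (by fun_prop) (by fun_prop)]
  rw [show (fun x : ℝ => ((-1 : ℝ) * x) ^ n) = fun x : ℝ => (-1 : ℝ)^n * x ^ n from by
        funext x; rw [mul_pow]] at this
  rw [integral_const_mul, hn.neg_one_pow] at this
  have h2 : M n = - M n := by calc M n = -1 * ∫ (a : ℝ), a ^ n ∂gaussianReal 0 1 := this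
    _ = - M n := by rw [M]; ring
  linarith

lemma int_even_pow (n : ℕ) (hn : Even n) :
    ∫ x : ℝ, x ^ n * rexp (-(1/2) * x ^ 2)
      = (2:ℝ) ^ (((n:ℝ) + 1)/2) * Real.Gamma (((n:ℝ) + 1)/2) := by
  have h1 : ∀ x : ℝ, x ^ n * rexp (-(1/2) * x ^ 2)
      = (fun t : ℝ => t ^ n * rexp (-(1/2) * t ^ 2)) |x| := by
    intro x; simp only [hn.pow_abs, sq_abs]
  calc ∫ x : ℝ, x ^ n * rexp (-(1/2) * x ^ 2)
      = ∫ x : ℝ, (fun t : ℝ => t ^ n * rexp (-(1/2) * t ^ 2)) |x| := by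
        congr 1; funext x; exact h1 x
    _ = 2 * ∫ x in Set.Ioi (0:ℝ), x ^ n * rexp (-(1/2) * x ^ 2) := by
        exact integral_comp_abs (f := fun t : ℝ => t ^ n * rexp (-(1/2) * t ^ 2))
    _ = 2 * ∫ x in Set.Ioi (0:ℝ), x ^ (n:ℝ) * rexp (-(1/2) * x ^ (2:ℝ)) := by
        congr 1
        refine setIntegral_congr_fun measurableSet_Ioi (fun x hx => ?_)
        rw [rpow_natCast, show ((2:ℝ) = ((2:ℕ):ℝ)) by norm_num, rpow_natCast]
    _ = 2 * ((1/2:ℝ) ^ (-((n:ℝ) + 1) / 2) * (1 / 2) * Real.Gamma (((n:ℝ) + 1) / 2)) := by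
        rw [integral_rpow_mul_exp_neg_mul_rpow (by norm_num)
          (lt_of_lt_of_le neg_one_lt_zero (Nat.cast_nonneg n)) (by norm_num)]
    _ = (2:ℝ) ^ (((n:ℝ) + 1)/2) * Real.Gamma (((n:ℝ) + 1)/2) := by
        have h2 : (((2:ℝ) ^ (-((n:ℝ)+1)/2) : ℝ))⁻¹ = (2:ℝ) ^ (((n:ℝ)+1)/2) := by
          rw [← Real.rpow_neg (by norm_num)]; ring_nf
        rw [show ((1:ℝ)/2) = (2:ℝ)⁻¹ by norm_num, Real.inv_rpow (by norm_num), h2]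
        ring

lemma M_even (n : ℕ) (hn : Even n) :
    M n = (√(2 * π))⁻¹ * ((2:ℝ) ^ (((n:ℝ) + 1)/2) * Real.Gamma (((n:ℝ) + 1)/2)) := by
  rw [M, gauss_int_eq, ← int_even_pow n hn, ← integral_const_mul]
  congr 1; funext x
  rw [pdf_eq]; ring

lemma M_two : M 2 = 1 := by
  rw [M_even 2 ⟨1, rfl⟩]
  have hG : Real.Gamma ((((2:ℕ):ℝ) + 1)/2) = (1/2) * √π := by
    rw [show ((((2:ℕ):ℝ)) + 1)/2 = 1/2 + 1 by norm_num, Real.Gamma_add_one (by norm_num),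
      Real.Gamma_one_half_eq]
  have hP : (2:ℝ) ^ ((((2:ℕ):ℝ) + 1)/2) = 2 * √2 := by
    rw [show ((((2:ℕ):ℝ)) + 1)/2 = 1 + 1/2 by norm_num, Real.rpow_add (by norm_num),
      Real.rpow_one, ← Real.sqrt_eq_rpow]
  rw [hG, hP, Real.sqrt_mul (by norm_num)]
  have h := Real.sqrt_pos.mpr Real.pi_pos
  have h2 : (0:ℝ) < √2 := Real.sqrt_pos.mpr (by norm_num)
  field_simp

lemma M_four : M 4 = 3 := by
  rw [M_even 4 ⟨2, rfl⟩]
  have hG : Real.Gamma ((((4:ℕ):ℝ) + 1)/2) = (3/2) * ((1/2) * √π) := by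
    rw [show ((((4:ℕ):ℝ)) + 1)/2 = 3/2 + 1 by norm_num, Real.Gamma_add_one (by norm_num),
      show (3/2:ℝ) = 1/2 + 1 by norm_num, Real.Gamma_add_one (by norm_num),
      Real.Gamma_one_half_eq]
  have hP : (2:ℝ) ^ ((((4:ℕ):ℝ) + 1)/2) = 4 * √2 := by
    rw [show ((((4:ℕ):ℝ)) + 1)/2 = 2 + 1/2 by norm_num, Real.rpow_add (by norm_num),
      ← Real.sqrt_eq_rpow, show (2:ℝ)^(2:ℝ) = 4 from by norm_num]
  rw [hG, hP, Real.sqrt_mul (by norm_num)]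
  have h := Real.sqrt_pos.mpr Real.pi_pos
  have h2 : (0:ℝ) < √2 := Real.sqrt_pos.mpr (by norm_num)
  field_simp
  ring


def G : Type := ℝ
instance : MeasurableSpace G := inferInstanceAs (MeasurableSpace ℝ)
noncomputable instance : MeasureSpace G :=
  { toMeasurableSpace := instMeasurableSpaceG, volume := gaussianReal 0 1 }
instance : IsProbabilityMeasure (volume : Measure G) :=
  inferInstanceAs (IsProbabilityMeasure (gaussianReal 0 1))
instance : SigmaFinite (volume : Measure G) := inferInstance

def mult {d : ℕ} (i j a b : Fin d) (c : Fin d) : ℕ :=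
  (if c = i then 1 else 0) + (if c = j then 1 else 0)
    + (if c = a then 1 else 0) + (if c = b then 1 else 0)

lemma monomial_eq {d : ℕ} (p : Fin d → ℝ) (i j a b : Fin d) :
    p i * p j * p a * p b = ∏ c, p c ^ mult i j a b c := by
  simp only [mult, pow_add, Finset.prod_mul_distrib]
  have h : ∀ x : Fin d, (∏ c, p c ^ (if c = x then 1 else 0)) = p x := by
    intro x
    rw [Finset.prod_congr rfl (g := fun c => if c = x then p c else 1)
      (fun c _ => by by_cases hc : c = x <;> simp [hc])]
    simp [Finset.prod_ite_eq']
  rw [h, h, h, h]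

lemma integral_monomial {d : ℕ} (i j a b : Fin d) :
    ∫ p : Fin d → ℝ, p i * p j * p a * p b ∂(Measure.pi fun _ : Fin d => gaussianReal 0 1)
      = ∏ c, M (mult i j a b c) := by
  calc ∫ p : Fin d → ℝ, p i * p j * p a * p b ∂(Measure.pi fun _ : Fin d => gaussianReal 0 1)
      = ∫ p : Fin d → G, ∏ c, (fun x : ℝ => x ^ mult i j a b c) (p c) := by
        show (∫ p : Fin d → ℝ, p i * p j * p a * p b ∂(Measure.pi fun _ : Fin d => gaussianReal 0 1))
          = ∫ p : Fin d → ℝ, ∏ c, p c ^ mult i j a b c ∂(Measure.pi fun _ : Fin d => gaussianReal 0 1)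
        congr 1; funext p; exact monomial_eq p i j a b
    _ = ∏ c, ∫ x : G, (fun x : ℝ => x ^ mult i j a b c) x :=
        MeasureTheory.integral_fintype_prod_eq_prod
          (fun c (x : G) => (fun x : ℝ => x ^ mult i j a b c) x) (μ := fun _ => (volume : Measure G))
    _ = ∏ c, M (mult i j a b c) := rfl

lemma integrable_monomial {d : ℕ} (i j a b : Fin d) :
    Integrable (fun p : Fin d → ℝ => p i * p j * p a * p b)
      (Measure.pi fun _ : Fin d => gaussianReal 0 1) := by
  have h : Integrable (fun p : Fin d → G => ∏ c, (fun x : ℝ => x ^ mult i j a b c) (p c)) :=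
    Integrable.fintype_prod (fun c => integrable_pow_gauss (mult i j a b c))
  exact h.congr (Filter.Eventually.of_forall (fun p => (monomial_eq p i j a b).symm))

def e {d : ℕ} (x y : Fin d) : ℝ := if x = y then 1 else 0

lemma prod_M_eq_one {d : ℕ} (m : Fin d → ℕ) (h : ∀ c, m c = 0 ∨ m c = 2) :
    ∏ c, M (m c) = 1 := by
  refine Finset.prod_eq_one (fun c _ => ?_)
  rcases h c with h | h <;> rw [h] <;> [exact M_zero; exact M_two]

lemma prod_M_eq_three {d : ℕ} (m : Fin d → ℕ) (x : Fin d) (hx : m x = 4)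
    (h : ∀ c, c ≠ x → m c = 0) : ∏ c, M (m c) = 3 := by
  rw [Finset.prod_eq_single x (fun c _ hc => by rw [h c hc]; exact M_zero)
    (fun hm => absurd (Finset.mem_univ x) hm), hx, M_four]

lemma prod_M_eq_zero {d : ℕ} (m : Fin d → ℕ) (x : Fin d) (hx : Odd (m x)) :
    ∏ c, M (m c) = 0 :=
  Finset.prod_eq_zero (Finset.mem_univ x) (M_odd _ hx)

lemma prod_M {d : ℕ} (i j a b : Fin d) :
    (∏ c, M (mult i j a b c)) = e i j * e a b + e i a * e j b + e i b * e j a := by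
  by_cases hij : i = j <;> by_cases hab : a = b <;> by_cases hia : i = a
  -- B1 : all equal
  · rw [prod_M_eq_three _ i
      (by simp only [mult]; split_ifs <;> simp_all)
      (fun c hc => by simp only [mult]; split_ifs <;> simp_all)]
    simp only [e]; split_ifs <;> simp_all <;> norm_num
  -- B2 : i=j, a=b, i≠a
  · rw [prod_M_eq_one _ (fun c => by simp only [mult]; split_ifs <;> simp_all)]
    simp only [e]; split_ifs <;> simp_all <;> norm_num
  -- B3a : i=j, a≠b, i=a
  · rw [prod_M_eq_zero _ b (by simp only [mult]; split_ifs <;> simp_all <;> decide)]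
    simp only [e]; split_ifs <;> simp_all <;> norm_num
  -- B3b : i=j, a≠b, i≠a
  · rw [prod_M_eq_zero _ a (by simp only [mult]; split_ifs <;> simp_all <;> decide)]
    simp only [e]; split_ifs <;> simp_all <;> norm_num
  -- B4a : i≠j, a=b, i=a
  · rw [prod_M_eq_zero _ j (by simp only [mult]; split_ifs <;> simp_all <;> decide)]
    simp only [e]; split_ifs <;> simp_all <;> norm_num
  -- B4b : i≠j, a=b, i≠a
  · rw [prod_M_eq_zero _ j (by simp only [mult]; split_ifs <;> simp_all <;> decide)]
    simp only [e]; split_ifs <;> simp_all <;> norm_num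
  -- i≠j, a≠b, i=a
  · by_cases hjb : j = b
    · rw [prod_M_eq_one _ (fun c => by simp only [mult]; split_ifs <;> simp_all)]
      simp only [e]; split_ifs <;> simp_all <;> norm_num
    · rw [prod_M_eq_zero _ b (by simp only [mult]; split_ifs <;> simp_all <;> decide)]
      simp only [e]; split_ifs <;> simp_all <;> norm_num
  -- i≠j, a≠b, i≠a
  · by_cases hib : i = b
    · by_cases hja : j = a
      · rw [prod_M_eq_one _ (fun c => by simp only [mult]; split_ifs <;> simp_all)]
        simp only [e]; split_ifs <;> simp_all <;> norm_num
      · rw [prod_M_eq_zero _ a (by simp only [mult]; split_ifs <;> simp_all <;> decide)]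
        simp only [e]; split_ifs <;> simp_all <;> norm_num
    · rw [prod_M_eq_zero _ i (by simp only [mult]; split_ifs <;> simp_all <;> decide)]
      simp only [e]; split_ifs <;> simp_all <;> norm_num

lemma gcb_sum1 {d : ℕ} (A : Fin d → Fin d → Fin d → ℝ) (k : Fin d) :
    ∑ i, ∑ a, ∑ j, ∑ b, (A i j k * A a b k) * (e i j * e a b)
      = (∑ i, A i i k) * (∑ i, A i i k) := by
  simp only [e, mul_ite, mul_one, mul_zero, ite_mul, zero_mul,
    Finset.sum_ite_eq, Finset.sum_ite_eq', Finset.mem_univ, if_true]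
  rw [Finset.sum_mul_sum]

lemma gcb_sum2 {d : ℕ} (A : Fin d → Fin d → Fin d → ℝ) (k : Fin d) :
    ∑ i, ∑ a, ∑ j, ∑ b, (A i j k * A a b k) * (e i a * e j b)
      = ∑ i, ∑ j, A i j k * A i j k := by
  refine Finset.sum_congr rfl (fun i _ => ?_)
  have h1 : ∀ a j : Fin d, ∑ b, (A i j k * A a b k) * (e i a * e j b)
      = (A i j k * A a j k) * e i a := by
    intro a j
    simp [e, mul_ite, ite_mul, Finset.sum_ite_eq, Finset.sum_ite_eq']
  rw [Finset.sum_congr rfl (fun a _ => Finset.sum_congr rfl (fun j _ => h1 a j))]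
  rw [Finset.sum_comm]
  refine Finset.sum_congr rfl (fun j _ => ?_)
  simp [e, mul_ite, ite_mul, Finset.sum_ite_eq, Finset.sum_ite_eq']

lemma gcb_sum3 {d : ℕ} (A : Fin d → Fin d → Fin d → ℝ) (k : Fin d) :
    ∑ i, ∑ a, ∑ j, ∑ b, (A i j k * A a b k) * (e i b * e j a)
      = ∑ i, ∑ j, A i j k * A j i k := by
  refine Finset.sum_congr rfl (fun i _ => ?_)
  have h1 : ∀ a j : Fin d, ∑ b, (A i j k * A a b k) * (e i b * e j a)
      = (A i j k * A a i k) * e j a := by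
    intro a j
    simp [e, mul_ite, ite_mul, Finset.sum_ite_eq, Finset.sum_ite_eq']
  rw [Finset.sum_congr rfl (fun a _ => Finset.sum_congr rfl (fun j _ => h1 a j))]
  rw [Finset.sum_comm]
  refine Finset.sum_congr rfl (fun j _ => ?_)
  simp [e, mul_ite, ite_mul, Finset.sum_ite_eq, Finset.sum_ite_eq']

lemma integral_expand {d : ℕ} (A : Fin d → Fin d → Fin d → ℝ) :
    ∫ p : Fin d → ℝ, (∑ k, (∑ i, ∑ j, A i j k * p i * p j) ^ 2)
        ∂(Measure.pi fun _ : Fin d => gaussianReal 0 1)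
      = ∑ k, ∑ i, ∑ a, ∑ j, ∑ b, (A i j k * A a b k) *
          (e i j * e a b + e i a * e j b + e i b * e j a) := by
  classical
  set μd := Measure.pi fun _ : Fin d => gaussianReal 0 1 with hμ
  have flat : ∀ (F : Fin d → Fin d → Fin d → Fin d → Fin d → ℝ),
      (∑ t : Fin d × Fin d × Fin d × Fin d × Fin d, F t.1 t.2.1 t.2.2.1 t.2.2.2.1 t.2.2.2.2)
        = ∑ k, ∑ i, ∑ a, ∑ j, ∑ b, F k i a j b := by
    intro F; simp only [Fintype.sum_prod_type]
  have hpt : ∀ p : Fin d → ℝ, (∑ k, (∑ i, ∑ j, A i j k * p i * p j) ^ 2)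
      = ∑ t : Fin d × Fin d × Fin d × Fin d × Fin d,
          (A t.2.1 t.2.2.2.1 t.1 * A t.2.2.1 t.2.2.2.2 t.1) *
            (p t.2.1 * p t.2.2.2.1 * p t.2.2.1 * p t.2.2.2.2) := by
    intro p
    rw [flat (fun k i a j b => (A i j k * A a b k) * (p i * p j * p a * p b))]
    refine Finset.sum_congr rfl (fun k _ => ?_)
    rw [sq, Finset.sum_mul_sum]
    refine Finset.sum_congr rfl (fun i _ => ?_)
    refine Finset.sum_congr rfl (fun a _ => ?_)
    rw [Finset.sum_mul_sum]
    exact Finset.sum_congr rfl (fun j _ => Finset.sum_congr rfl (fun b _ => by ring))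
  calc ∫ p : Fin d → ℝ, (∑ k, (∑ i, ∑ j, A i j k * p i * p j) ^ 2) ∂μd
      = ∫ p : Fin d → ℝ, (∑ t : Fin d × Fin d × Fin d × Fin d × Fin d,
          (A t.2.1 t.2.2.2.1 t.1 * A t.2.2.1 t.2.2.2.2 t.1) *
            (p t.2.1 * p t.2.2.2.1 * p t.2.2.1 * p t.2.2.2.2)) ∂μd := by
        congr 1; funext p; exact hpt p
    _ = ∑ t : Fin d × Fin d × Fin d × Fin d × Fin d,
          ∫ p : Fin d → ℝ, (A t.2.1 t.2.2.2.1 t.1 * A t.2.2.1 t.2.2.2.2 t.1) *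
            (p t.2.1 * p t.2.2.2.1 * p t.2.2.1 * p t.2.2.2.2) ∂μd := by
        refine integral_finset_sum _ (fun t _ => ?_)
        exact (integrable_monomial _ _ _ _).const_mul _
    _ = ∑ t : Fin d × Fin d × Fin d × Fin d × Fin d,
          (A t.2.1 t.2.2.2.1 t.1 * A t.2.2.1 t.2.2.2.2 t.1) *
            (e t.2.1 t.2.2.2.1 * e t.2.2.1 t.2.2.2.2 + e t.2.1 t.2.2.1 * e t.2.2.2.1 t.2.2.2.2
              + e t.2.1 t.2.2.2.2 * e t.2.2.2.1 t.2.2.1) := by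
        refine Finset.sum_congr rfl (fun t _ => ?_)
        rw [integral_const_mul, integral_monomial, prod_M]
    _ = ∑ k, ∑ i, ∑ a, ∑ j, ∑ b, (A i j k * A a b k) *
          (e i j * e a b + e i a * e j b + e i b * e j a) := by
        exact flat (fun k i a j b => (A i j k * A a b k) *
          (e i j * e a b + e i a * e j b + e i b * e j a))

namespace NB
variable {d : ℕ} (A : Fin d → Fin d → Fin d → ℝ)

lemma bdd : BddAbove {s | ∃ (x : Fin d → Fin d → ℝ) (y : Fin d → ℝ),
    (∑ i, ∑ j, x i j ^ 2) ≤ 1 ∧ (∑ k, y k ^ 2) ≤ 1 ∧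
    s = ∑ i, ∑ j, ∑ k, A i j k * x i j * y k} := by
  refine ⟨Real.sqrt (∑ i, ∑ j, ∑ k, A i j k ^ 2), fun s hs => ?_⟩
  obtain ⟨x, y, hx, hy, rfl⟩ := hs
  -- flatten pairs
  have flat : ∀ (F : Fin d → Fin d → ℝ),
      (∑ t : Fin d × Fin d, F t.1 t.2) = ∑ i, ∑ j, F i j := by
    intro F; simp [Fintype.sum_prod_type]
  have hval : (∑ i, ∑ j, ∑ k, A i j k * x i j * y k)
      = ∑ t : Fin d × Fin d, x t.1 t.2 * (∑ k, A t.1 t.2 k * y k) := by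
    rw [flat (fun i j => x i j * (∑ k, A i j k * y k))]
    refine Finset.sum_congr rfl (fun i _ => Finset.sum_congr rfl (fun j _ => ?_))
    rw [Finset.mul_sum]
    exact Finset.sum_congr rfl (fun k _ => by ring)
  rw [hval]
  have hxs : (∑ t : Fin d × Fin d, x t.1 t.2 ^ 2) ≤ 1 := by
    rw [flat (fun i j => x i j ^ 2)]; exact hx
  have cs1 := Finset.sum_mul_sq_le_sq_mul_sq Finset.univ (fun t : Fin d × Fin d => x t.1 t.2)
    (fun t => ∑ k, A t.1 t.2 k * y k)
  have hg : ∀ t : Fin d × Fin d, (∑ k, A t.1 t.2 k * y k) ^ 2 ≤ ∑ k, A t.1 t.2 k ^ 2 := by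
    intro t
    calc (∑ k, A t.1 t.2 k * y k) ^ 2
        ≤ (∑ k, A t.1 t.2 k ^ 2) * ∑ k, y k ^ 2 :=
          Finset.sum_mul_sq_le_sq_mul_sq Finset.univ _ _
      _ ≤ (∑ k, A t.1 t.2 k ^ 2) * 1 := by
          refine mul_le_mul_of_nonneg_left hy (by positivity)
      _ = ∑ k, A t.1 t.2 k ^ 2 := mul_one _
  have hsum : (∑ t : Fin d × Fin d, (∑ k, A t.1 t.2 k * y k) ^ 2)
      ≤ ∑ i, ∑ j, ∑ k, A i j k ^ 2 := by
    rw [← flat (fun i j => ∑ k, A i j k ^ 2)]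
    exact Finset.sum_le_sum (fun t _ => hg t)
  have hsq : (∑ t : Fin d × Fin d, x t.1 t.2 * (∑ k, A t.1 t.2 k * y k)) ^ 2
      ≤ ∑ i, ∑ j, ∑ k, A i j k ^ 2 := by
    calc (∑ t : Fin d × Fin d, x t.1 t.2 * (∑ k, A t.1 t.2 k * y k)) ^ 2
        ≤ (∑ t : Fin d × Fin d, x t.1 t.2 ^ 2) * ∑ t : Fin d × Fin d, (∑ k, A t.1 t.2 k * y k) ^ 2 := cs1
      _ ≤ 1 * ∑ t : Fin d × Fin d, (∑ k, A t.1 t.2 k * y k) ^ 2 := by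
          refine mul_le_mul_of_nonneg_right hxs (by positivity)
      _ = ∑ t : Fin d × Fin d, (∑ k, A t.1 t.2 k * y k) ^ 2 := one_mul _
      _ ≤ ∑ i, ∑ j, ∑ k, A i j k ^ 2 := hsum
  calc (∑ t : Fin d × Fin d, x t.1 t.2 * (∑ k, A t.1 t.2 k * y k))
      ≤ |∑ t : Fin d × Fin d, x t.1 t.2 * (∑ k, A t.1 t.2 k * y k)| := le_abs_self _
    _ = Real.sqrt ((∑ t : Fin d × Fin d, x t.1 t.2 * (∑ k, A t.1 t.2 k * y k)) ^ 2) :=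
        (Real.sqrt_sq_eq_abs _).symm
    _ ≤ Real.sqrt (∑ i, ∑ j, ∑ k, A i j k ^ 2) := Real.sqrt_le_sqrt hsq

lemma mem0 : (0:ℝ) ∈ {s | ∃ (x : Fin d → Fin d → ℝ) (y : Fin d → ℝ),
    (∑ i, ∑ j, x i j ^ 2) ≤ 1 ∧ (∑ k, y k ^ 2) ≤ 1 ∧
    s = ∑ i, ∑ j, ∑ k, A i j k * x i j * y k} := by
  refine ⟨0, 0, by simp, by simp, by simp⟩

lemma nonneg : 0 ≤ norm12_3 A := le_csSup (bdd A) (mem0 A)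

lemma feas (x : Fin d → Fin d → ℝ) (y : Fin d → ℝ) (hx : (∑ i, ∑ j, x i j ^ 2) ≤ 1)
    (hy : (∑ k, y k ^ 2) ≤ 1) :
    (∑ i, ∑ j, ∑ k, A i j k * x i j * y k) ≤ norm12_3 A :=
  le_csSup (bdd A) ⟨x, y, hx, hy, rfl⟩



lemma sum_sq_div {S2 F : ℝ} (B : Fin d → Fin d → ℝ) (h : S2 = ∑ i, ∑ j, B i j ^ 2) :
    (∑ i, ∑ j, B i j ^ 2 / F ^ 2) = S2 / F ^ 2 := by
  rw [h, Finset.sum_div]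
  exact Finset.sum_congr rfl (fun i _ => (Finset.sum_div _ _ _).symm)

lemma slice (k : Fin d) : ∑ i, ∑ j, A i j k ^ 2 ≤ norm12_3 A ^ 2 := by
  set S2 := ∑ i, ∑ j, A i j k ^ 2 with hS2
  have hS2nn : 0 ≤ S2 := by positivity
  rcases eq_or_lt_of_le hS2nn with h0 | hpos
  · rw [← h0]; positivity
  · set F := Real.sqrt S2 with hF
    have hFpos : 0 < F := Real.sqrt_pos.mpr hpos
    have hFsq : F ^ 2 = S2 := Real.sq_sqrt hS2nn
    have hfe := feas A (fun i j => A i j k / F) (fun k' => if k' = k then 1 else 0)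
      (by
        simp only [div_pow]
        rw [sum_sq_div (fun i j => A i j k) hS2, hFsq, div_self (ne_of_gt hpos)])
      (by
        have h2 : ∀ k' : Fin d, ((if k' = k then (1:ℝ) else 0)) ^ 2
            = if k' = k then (1:ℝ) else 0 := by
          intro k'; split <;> norm_num
        rw [Finset.sum_congr rfl (fun k' _ => h2 k')]
        simp [Finset.sum_ite_eq'])
    have hval : (∑ i, ∑ j, ∑ k', A i j k' * (A i j k / F) * (if k' = k then (1:ℝ) else 0)) = F := by
      have h1 : ∀ i j : Fin d,
          (∑ k', A i j k' * (A i j k / F) * (if k' = k then (1:ℝ) else 0)) = A i j k ^ 2 / F := by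
        intro i j
        simp only [mul_ite, mul_one, mul_zero, Finset.sum_ite_eq', Finset.mem_univ, if_true]
        ring
      rw [Finset.sum_congr rfl (fun i _ => Finset.sum_congr rfl (fun j _ => h1 i j))]
      have h4 : (∑ i, ∑ j, A i j k ^ 2 / F) = S2 / F := by
        rw [hS2, Finset.sum_div]
        exact Finset.sum_congr rfl (fun i _ => (Finset.sum_div _ _ _).symm)
      rw [h4, ← hFsq, sq, mul_div_assoc, div_self (ne_of_gt hFpos), mul_one]
    rw [hval] at hfe
    calc S2 = F ^ 2 := hFsq.symm
      _ ≤ norm12_3 A ^ 2 := pow_le_pow_left₀ hFpos.le hfe 2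

lemma trace (hd : 0 < d) : ∑ k, (∑ i, A i i k) ^ 2 ≤ (d : ℝ) * norm12_3 A ^ 2 := by
  set c : Fin d → ℝ := fun k => ∑ i, A i i k with hc
  set C2 := ∑ k, c k ^ 2 with hC2
  have hC2nn : 0 ≤ C2 := by positivity
  rcases eq_or_lt_of_le hC2nn with h0 | hpos
  · rw [← h0]; positivity
  · set C := Real.sqrt C2 with hCdef
    have hCpos : 0 < C := Real.sqrt_pos.mpr hpos
    have hCsq : C ^ 2 = C2 := Real.sq_sqrt hC2nn
    have hdpos : (0:ℝ) < (d:ℝ) := by exact_mod_cast hd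
    have hsd : Real.sqrt d ^ 2 = (d:ℝ) := Real.sq_sqrt hdpos.le
    have hsdpos : (0:ℝ) < Real.sqrt d := Real.sqrt_pos.mpr hdpos
    have hfe := feas A (fun i j => (if i = j then (1:ℝ) else 0) / Real.sqrt d)
      (fun k => c k / C)
      (by
        simp only [div_pow]
        have h2 : ∀ i j : Fin d, ((if i = j then (1:ℝ) else 0)) ^ 2
            = if i = j then (1:ℝ) else 0 := by
          intro i j; split <;> norm_num
        have h3 : ∀ i : Fin d, (∑ j, ((if i = j then (1:ℝ) else 0)) ^ 2 / Real.sqrt d ^ 2)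
            = 1 / (d:ℝ) := by
          intro i
          rw [← Finset.sum_div, Finset.sum_congr rfl (fun j _ => h2 i j)]
          simp [Finset.sum_ite_eq, hsd]
        rw [Finset.sum_congr rfl (fun i _ => h3 i)]
        simp only [Finset.sum_const, Finset.card_univ, Fintype.card_fin, nsmul_eq_mul, one_div]
        rw [mul_inv_cancel₀ (ne_of_gt hdpos)])
      (by
        simp only [div_pow]
        rw [← Finset.sum_div, ← hC2, hCsq, div_self (ne_of_gt hpos)])
    have hval : (∑ i, ∑ j, ∑ k, A i j k * ((if i = j then (1:ℝ) else 0) / Real.sqrt d) * (c k / C))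
        = C / Real.sqrt d := by
      have h1 : ∀ i : Fin d, (∑ j, ∑ k, A i j k * ((if i = j then (1:ℝ) else 0) / Real.sqrt d) * (c k / C))
          = ∑ k, A i i k * (c k / (Real.sqrt d * C)) := by
        intro i
        have h1a : ∀ j k : Fin d, A i j k * ((if i = j then (1:ℝ) else 0) / Real.sqrt d) * (c k / C)
            = (if i = j then A i j k * (c k / (Real.sqrt d * C)) else 0) := by
          intro j k; by_cases h : i = j <;> simp [h] <;> ring
        rw [Finset.sum_congr rfl (fun j _ => Finset.sum_congr rfl (fun k _ => h1a j k))]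
        have h1b : ∀ j : Fin d, (∑ k, if i = j then A i j k * (c k / (Real.sqrt d * C)) else 0)
            = if i = j then (∑ k, A i j k * (c k / (Real.sqrt d * C))) else 0 := by
          intro j; split <;> simp
        rw [Finset.sum_congr rfl (fun j _ => h1b j)]
        simp [Finset.sum_ite_eq]
      rw [Finset.sum_congr rfl (fun i _ => h1 i), Finset.sum_comm]
      have h2v : ∀ k : Fin d, (∑ i, A i i k * (c k / (Real.sqrt d * C)))
          = c k ^ 2 / (Real.sqrt d * C) := by
        intro k
        rw [← Finset.sum_mul]
        rw [show (∑ i, A i i k) = c k from rfl]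
        ring
      rw [Finset.sum_congr rfl (fun k _ => h2v k), ← Finset.sum_div, ← hC2, ← hCsq, sq,
        mul_comm (Real.sqrt (d:ℝ)) C, mul_div_mul_left _ _ (ne_of_gt hCpos)]
    rw [hval] at hfe
    have h5 : C ≤ norm12_3 A * Real.sqrt d := (div_le_iff₀ hsdpos).mp hfe
    have h6 : C ^ 2 ≤ (norm12_3 A * Real.sqrt d) ^ 2 := pow_le_pow_left₀ hCpos.le h5 2
    rw [mul_pow, hsd] at h6
    rw [← hCsq]
    linarith


lemma cross (k : Fin d) :
    ∑ i, ∑ j, A i j k * A j i k ≤ ∑ i, ∑ j, A i j k ^ 2 := by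
  have key : ∑ i, ∑ j, (A i j k * A j i k * 2) ≤ ∑ i, ∑ j, (A i j k ^ 2 + A j i k ^ 2) :=
    Finset.sum_le_sum (fun i _ => Finset.sum_le_sum (fun j _ => by
      nlinarith [sq_nonneg (A i j k - A j i k)]))
  have split : ∑ i, ∑ j, (A i j k ^ 2 + A j i k ^ 2)
      = (∑ i, ∑ j, A i j k ^ 2) + (∑ i, ∑ j, A j i k ^ 2) := by
    simp [Finset.sum_add_distrib]
  have comm : (∑ i, ∑ j, A j i k ^ 2) = ∑ i, ∑ j, A i j k ^ 2 := Finset.sum_comm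
  have lhs2 : ∑ i, ∑ j, (A i j k * A j i k * 2) = (∑ i, ∑ j, A i j k * A j i k) * 2 := by
    simp [Finset.sum_mul]
  linarith

end NB

open MeasureTheory ProbabilityTheory in
/-- Gaussian chaos bound: for `p ~ N(0, I_d)`,
`E[ Σ_k ( Σ_{i,j} A_{ijk} p_i p_j )² ] ≤ 3 d ‖A‖²_{{1,2}{3}}`. -/
theorem gaussian_chaos_bound {d : ℕ} (A : Fin d → Fin d → Fin d → ℝ) :
    ∫ p : Fin d → ℝ, (∑ k, (∑ i, ∑ j, A i j k * p i * p j) ^ 2)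
        ∂(Measure.pi fun _ : Fin d => gaussianReal 0 1) ≤
      3 * d * norm12_3 A ^ 2 := by
  rw [integral_expand A]
  have hsplit : ∀ k : Fin d,
      (∑ i, ∑ a, ∑ j, ∑ b, (A i j k * A a b k) *
        (e i j * e a b + e i a * e j b + e i b * e j a))
      = (∑ i, A i i k) * (∑ i, A i i k) + (∑ i, ∑ j, A i j k * A i j k)
          + (∑ i, ∑ j, A i j k * A j i k) := by
    intro k
    rw [show (∑ i, ∑ a, ∑ j, ∑ b, (A i j k * A a b k) *
          (e i j * e a b + e i a * e j b + e i b * e j a))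
        = (∑ i, ∑ a, ∑ j, ∑ b, (A i j k * A a b k) * (e i j * e a b))
          + (∑ i, ∑ a, ∑ j, ∑ b, (A i j k * A a b k) * (e i a * e j b))
          + (∑ i, ∑ a, ∑ j, ∑ b, (A i j k * A a b k) * (e i b * e j a)) from by
      simp only [mul_add, Finset.sum_add_distrib]]
    rw [gcb_sum1 A k, gcb_sum2 A k, gcb_sum3 A k]
  rw [Finset.sum_congr rfl (fun k _ => hsplit k)]
  rcases Nat.eq_zero_or_pos d with hd0 | hdpos
  · subst hd0
    simp
  · set N := norm12_3 A with hN
    have hsq : ∀ k : Fin d, (∑ i, ∑ j, A i j k * A i j k) = ∑ i, ∑ j, A i j k ^ 2 := by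
      intro k
      exact Finset.sum_congr rfl (fun i _ => Finset.sum_congr rfl (fun j _ => (sq (A i j k)).symm))
    have h1 : ∑ k, (∑ i, A i i k) * (∑ i, A i i k) ≤ (d:ℝ) * N ^ 2 := by
      have := NB.trace A hdpos
      calc ∑ k, (∑ i, A i i k) * (∑ i, A i i k)
          = ∑ k, (∑ i, A i i k) ^ 2 := Finset.sum_congr rfl (fun k _ => (sq _).symm)
        _ ≤ (d:ℝ) * N ^ 2 := this
    have h2 : ∑ k, ∑ i, ∑ j, A i j k * A i j k ≤ (d:ℝ) * N ^ 2 := by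
      calc ∑ k, ∑ i, ∑ j, A i j k * A i j k
          = ∑ k : Fin d, ∑ i, ∑ j, A i j k ^ 2 := Finset.sum_congr rfl (fun k _ => hsq k)
        _ ≤ ∑ k : Fin d, N ^ 2 := Finset.sum_le_sum (fun k _ => NB.slice A k)
        _ = (d:ℝ) * N ^ 2 := by
            rw [Finset.sum_const, Finset.card_univ, Fintype.card_fin, nsmul_eq_mul]
    have h3 : ∑ k, ∑ i, ∑ j, A i j k * A j i k ≤ (d:ℝ) * N ^ 2 := by
      calc ∑ k, ∑ i, ∑ j, A i j k * A j i k
          ≤ ∑ k : Fin d, ∑ i, ∑ j, A i j k ^ 2 := Finset.sum_le_sum (fun k _ => NB.cross A k)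
        _ ≤ ∑ k : Fin d, N ^ 2 := Finset.sum_le_sum (fun k _ => NB.slice A k)
        _ = (d:ℝ) * N ^ 2 := by
            rw [Finset.sum_const, Finset.card_univ, Fintype.card_fin, nsmul_eq_mul]
    have hsplit2 : ∑ k, ((∑ i, A i i k) * (∑ i, A i i k) + (∑ i, ∑ j, A i j k * A i j k)
          + (∑ i, ∑ j, A i j k * A j i k))
        = (∑ k, (∑ i, A i i k) * (∑ i, A i i k)) + (∑ k, ∑ i, ∑ j, A i j k * A i j k)
          + (∑ k, ∑ i, ∑ j, A i j k * A j i k) := by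
      simp [Finset.sum_add_distrib]
    rw [hsplit2]
    linarith
end

section
/- Let f : ℝ^d → ℝ be three times differentiable with third derivative tensor H'(x). If f is L₁-Hessian Lipschitz, i.e. ‖H'(x)‖_{{1}{2}{3}} ≤ L₁ for all x, then f is √d·L₁-strongly Hessian Lipschitz, i.e. ‖H'(x)‖_{{1,2}{3}} ≤ √d·L₁ for all x. -/
open scoped BigOperators

/-- The third-derivative 3-tensor of `f` at `x`, with entries
`H'(x)_{ijk} = D³f(x)[e_i, e_j, e_k]`. -/
noncomputable def thirdDeriv {d : ℕ} (f : EuclideanSpace ℝ (Fin d) → ℝ)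
    (x : EuclideanSpace ℝ (Fin d)) (i j k : Fin d) : ℝ :=
  iteratedFDeriv ℝ 3 f x
    ![EuclideanSpace.single i 1, EuclideanSpace.single j 1, EuclideanSpace.single k 1]


lemma abs_le_one_of_sum_sq {d : ℕ} (x : Fin d → ℝ) (hx : (∑ i, x i ^ 2) ≤ 1) (i : Fin d) :
    |x i| ≤ 1 := by
  have h1 : x i ^ 2 ≤ ∑ j, x j ^ 2 :=
    Finset.single_le_sum (fun j _ => sq_nonneg (x j)) (Finset.mem_univ i)
  nlinarith [abs_nonneg (x i), sq_abs (x i)]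

lemma bdd123 {d : ℕ} (A : Fin d → Fin d → Fin d → ℝ) :
    BddAbove {s | ∃ x y z : Fin d → ℝ,
      (∑ i, x i ^ 2) ≤ 1 ∧ (∑ j, y j ^ 2) ≤ 1 ∧ (∑ k, z k ^ 2) ≤ 1 ∧
      s = ∑ i, ∑ j, ∑ k, A i j k * x i * y j * z k} := by
  refine ⟨∑ i, ∑ j, ∑ k, |A i j k|, ?_⟩
  rintro s ⟨x, y, z, hx, hy, hz, rfl⟩
  refine Finset.sum_le_sum fun i _ => Finset.sum_le_sum fun j _ => Finset.sum_le_sum fun k _ => ?_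
  calc A i j k * x i * y j * z k ≤ |A i j k * x i * y j * z k| := le_abs_self _
    _ = |A i j k| * |x i| * |y j| * |z k| := by simp [abs_mul]
    _ ≤ |A i j k| * 1 * 1 * 1 := by
        gcongr <;> [exact abs_le_one_of_sum_sq x hx i; exact abs_le_one_of_sum_sq y hy j;
          exact abs_le_one_of_sum_sq z hz k]
    _ = |A i j k| := by ring

lemma pointwise123 {d : ℕ} (A : Fin d → Fin d → Fin d → ℝ) (L₁ : ℝ) (hL : norm123 A ≤ L₁)
    (x y z : Fin d → ℝ) (hx : (∑ i, x i ^ 2) ≤ 1) (hy : (∑ j, y j ^ 2) ≤ 1)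
    (hz : (∑ k, z k ^ 2) ≤ 1) :
    (∑ i, ∑ j, ∑ k, A i j k * x i * y j * z k) ≤ L₁ :=
  le_trans (le_csSup (bdd123 A) ⟨x, y, z, hx, hy, hz, rfl⟩) hL

theorem key {d : ℕ} (A : Fin d → Fin d → Fin d → ℝ) (L₁ : ℝ) (hL : norm123 A ≤ L₁) :
    norm12_3 A ≤ Real.sqrt d * L₁ := by
  have hA := pointwise123 A L₁ hL
  have hne : {s | ∃ (x : Fin d → Fin d → ℝ) (y : Fin d → ℝ),
      (∑ i, ∑ j, x i j ^ 2) ≤ 1 ∧ (∑ k, y k ^ 2) ≤ 1 ∧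
      s = ∑ i, ∑ j, ∑ k, A i j k * x i j * y k}.Nonempty := by
    exact ⟨0, fun _ _ => 0, fun _ => 0, by simp, by simp, by simp⟩
  have flat : ∀ (g : Fin d → Fin d → ℝ), (∑ i, ∑ j, g i j) = ∑ p : Fin d × Fin d, g p.1 p.2 := by
    intro g
    rw [← Finset.univ_product_univ, Finset.sum_product]
  rcases Nat.eq_zero_or_pos d with hd | hd
  · subst hd
    apply csSup_le hne
    rintro s ⟨x, y, hx, hy, rfl⟩
    simp
  have hL₁ : 0 ≤ L₁ := by
    have := hA (fun _ => 0) (fun _ => 0) (fun _ => 0) (by simp) (by simp) (by simp)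
    simpa using this
  have row : ∀ (i : Fin d) (y : Fin d → ℝ), (∑ k, y k ^ 2) ≤ 1 →
      (∑ j, (∑ k, A i j k * y k) ^ 2) ≤ L₁ ^ 2 := by
    intro i y hy
    set B : Fin d → ℝ := fun j => ∑ k, A i j k * y k with hB
    set r : ℝ := Real.sqrt (∑ j, B j ^ 2) with hr
    have hBsum : (∑ j, B j ^ 2) = r ^ 2 :=
      (Real.sq_sqrt (Finset.sum_nonneg fun j _ => sq_nonneg _)).symm
    rcases eq_or_lt_of_le (Real.sqrt_nonneg (∑ j, B j ^ 2)) with h0 | h0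
    · rw [hBsum, hr, ← h0]
      nlinarith [sq_nonneg L₁]
    have hr0 : 0 < r := by rw [hr]; exact h0
    have hrL : r ≤ L₁ := by
      have hmain := hA (fun i' => if i' = i then 1 else 0) (fun j => B j / r) y
        (by simp) ?_ hy
      · calc r = ∑ i', ∑ j, ∑ k, A i' j k * (if i' = i then 1 else 0) * (B j / r) * y k := by
              rw [Finset.sum_eq_single i]
              · have h1 : ∀ j, (∑ k, A i j k * (if i = i then 1 else 0) * (B j / r) * y k)
                    = (B j / r) * B j := by
                  intro j
                  calc (∑ k, A i j k * (if i = i then 1 else 0) * (B j / r) * y k)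
                      = ∑ k, (B j / r) * (A i j k * y k) :=
                        Finset.sum_congr rfl fun k _ => by
                          rw [if_pos rfl]; ring
                    _ = (B j / r) * ∑ k, A i j k * y k := (Finset.mul_sum _ _ _).symm
                    _ = (B j / r) * B j := rfl
                rw [Finset.sum_congr rfl fun j _ => h1 j]
                have h2 : (∑ j, B j / r * B j) = (∑ j, B j ^ 2) / r := by
                  rw [Finset.sum_div]
                  exact Finset.sum_congr rfl fun j _ => by ring
                rw [h2, hBsum, sq]
                field_simp
              · intro b _ hb
                apply Finset.sum_eq_zero; intro j _
                apply Finset.sum_eq_zero; intro k _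
                rw [if_neg hb]; ring
              · intro h; exact absurd (Finset.mem_univ i) h
          _ ≤ L₁ := hmain
      · have h3 : (∑ j, (B j / r) ^ 2) = (∑ j, B j ^ 2) / r ^ 2 := by
          rw [Finset.sum_div]; exact Finset.sum_congr rfl fun j _ => by rw [div_pow]
        rw [h3, hBsum, div_self (by positivity)]
    rw [hBsum]
    exact pow_le_pow_left₀ hr0.le hrL 2
  -- main bound
  apply csSup_le hne
  rintro s ⟨x, y, hx, hy, rfl⟩
  set B : Fin d → Fin d → ℝ := fun i j => ∑ k, A i j k * y k with hB
  have hS : (∑ i, ∑ j, ∑ k, A i j k * x i j * y k)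
      = ∑ p : Fin d × Fin d, x p.1 p.2 * B p.1 p.2 := by
    rw [← flat (fun i j => x i j * B i j)]
    refine Finset.sum_congr rfl fun i _ => Finset.sum_congr rfl fun j _ => ?_
    calc (∑ k, A i j k * x i j * y k) = ∑ k, x i j * (A i j k * y k) :=
          Finset.sum_congr rfl fun k _ => by ring
      _ = x i j * ∑ k, A i j k * y k := (Finset.mul_sum _ _ _).symm
      _ = x i j * B i j := rfl
  rw [hS]
  have hBsq : (∑ p : Fin d × Fin d, B p.1 p.2 ^ 2) ≤ d * L₁ ^ 2 := by
    rw [← flat (fun i j => B i j ^ 2)]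
    calc (∑ i, ∑ j, B i j ^ 2) ≤ ∑ i : Fin d, L₁ ^ 2 :=
          Finset.sum_le_sum fun i _ => row i y hy
      _ = d * L₁ ^ 2 := by simp [mul_comm]
  have hxsq : (∑ p : Fin d × Fin d, x p.1 p.2 ^ 2) ≤ 1 := by
    rw [← flat (fun i j => x i j ^ 2)]; exact hx
  have hCS := Finset.sum_mul_sq_le_sq_mul_sq Finset.univ
    (fun p : Fin d × Fin d => x p.1 p.2) (fun p => B p.1 p.2)
  have hsq : (∑ p : Fin d × Fin d, x p.1 p.2 * B p.1 p.2) ^ 2 ≤ d * L₁ ^ 2 := by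
    calc (∑ p : Fin d × Fin d, x p.1 p.2 * B p.1 p.2) ^ 2
        ≤ (∑ p : Fin d × Fin d, x p.1 p.2 ^ 2) * ∑ p : Fin d × Fin d, B p.1 p.2 ^ 2 := hCS
      _ ≤ 1 * (d * L₁ ^ 2) := by
          apply mul_le_mul hxsq hBsq (Finset.sum_nonneg fun p _ => sq_nonneg _) zero_le_one
      _ = d * L₁ ^ 2 := one_mul _
  calc (∑ p : Fin d × Fin d, x p.1 p.2 * B p.1 p.2)
      ≤ |∑ p : Fin d × Fin d, x p.1 p.2 * B p.1 p.2| := le_abs_self _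
    _ = Real.sqrt ((∑ p : Fin d × Fin d, x p.1 p.2 * B p.1 p.2) ^ 2) :=
        (Real.sqrt_sq_eq_abs _).symm
    _ ≤ Real.sqrt (d * L₁ ^ 2) := Real.sqrt_le_sqrt hsq
    _ = Real.sqrt d * L₁ := by
        rw [Real.sqrt_mul (Nat.cast_nonneg d), Real.sqrt_sq hL₁]

/-- Every `L₁`-Hessian Lipschitz function is `√d·L₁`-strongly Hessian Lipschitz. -/
theorem strongly_hessian_lipschitz_of_hessian_lipschitz {d : ℕ}
    (f : EuclideanSpace ℝ (Fin d) → ℝ) (hf : ContDiff ℝ 3 f) (L₁ : ℝ)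
    (hL : ∀ x, norm123 (thirdDeriv f x) ≤ L₁) :
    ∀ x, norm12_3 (thirdDeriv f x) ≤ Real.sqrt d * L₁ := by
  intro x
  exact key _ L₁ (hL x)
end
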